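/- Let d ≥ 2, D ∈ ℝ, and λ = 0 with D ≠ 0. Set C = 1/(e^D - 1). Then C ∉ [-1, 0], and the function u(r) = 1/(C + r) is continuously differentiable on [0,1], satisfies u' = -u², and ∫₀¹ u(r) dr = D. Moreover, C is the unique real number outside [-1,0] with ln((C+1)/C) = D. -/

import Mathlib

open Real Set

theorem stmt_5 (d : ℕ) (hd : 2 ≤ d) (D : ℝ) (hD : D ≠ 0)
    (C : ℝ) (hC : C = 1 / (Real.exp D - 1))
    (u : ℝ → ℝ) (hu : u = fun r => 1 / (C + r)) :
    C ∉ Set.Icc (-1 : ℝ) 0 ∧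
    ContDiffOn ℝ 1 u (Set.Icc 0 1) ∧
    (∀ r ∈ Set.Icc (0:ℝ) 1,
      HasDerivWithinAt u (-(u r) ^ 2) (Set.Icc 0 1) r) ∧
    (∫ r in (0:ℝ)..1, u r = D) ∧
    ∀ C' : ℝ, C' ∉ Set.Icc (-1 : ℝ) 0 →
      Real.log ((C' + 1) / C') = D → C' = C := by
  have hE : Real.exp D - 1 ≠ 0 := by
    intro h
    have : Real.exp D = Real.exp 0 := by rw [Real.exp_zero]; linarith
    exact hD (Real.exp_injective this)
  have hEpos : 0 < Real.exp D := Real.exp_pos D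
  have hsign : 0 < C ∨ C < -1 := by
    rcases lt_or_gt_of_ne hD with h | h
    · right
      have h1 : Real.exp D < 1 := by
        have := Real.exp_lt_exp.mpr h; rwa [Real.exp_zero] at this
      rw [hC, div_lt_iff_of_neg (by linarith : Real.exp D - 1 < 0)]
      nlinarith
    · left
      have h1 : 1 < Real.exp D := by
        have := Real.exp_lt_exp.mpr h; rwa [Real.exp_zero] at this
      rw [hC]; exact div_pos one_pos (by linarith)
  have hC0 : C ≠ 0 := by rcases hsign with h | h <;> intro hh <;> linarith
  have hne : ∀ r ∈ Set.Icc (0:ℝ) 1, C + r ≠ 0 := by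
    intro r hr
    rcases hsign with h | h
    · have := hr.1; intro hc; linarith
    · have := hr.2; intro hc; linarith
  have hnotmem : C ∉ Set.Icc (-1 : ℝ) 0 := by
    intro ⟨h1, h2⟩
    rcases hsign with h | h <;> linarith
  have hratio : (C + 1) / C = Real.exp D := by
    rw [hC]; field_simp; ring
  refine ⟨hnotmem, ?_, ?_, ?_, ?_⟩
  · rw [hu]
    apply ContDiffOn.div contDiffOn_const
    · exact (contDiff_const.add contDiff_id).contDiffOn
    · exact hne
  · intro r hr
    have hder : HasDerivAt (fun r => 1 / (C + r)) (-(1/(C+r))^2) r := by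
      have h1 : HasDerivAt (fun r : ℝ => C + r) 1 r :=
        (hasDerivAt_id r).const_add C
      have h2 := h1.inv (hne r hr)
      have : -(1/(C+r))^2 = -1 / (C + r) ^ 2 := by
        rw [div_pow]; ring
      rw [this]
      have h3 : (fun r : ℝ => 1 / (C + r)) = (fun r : ℝ => C + r)⁻¹ := by funext x; simp [one_div]
      rw [h3]; exact h2
    rw [hu]
    exact hder.hasDerivWithinAt
  · rw [hu]
    have h0 : (0:ℝ) ∉ uIcc (C + 0) (C + 1) := by
      rw [Set.mem_uIcc]
      push_neg
      rcases hsign with h | h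
      · constructor <;> intro <;> linarith
      · constructor <;> intro <;> linarith
    calc ∫ r in (0:ℝ)..1, 1 / (C + r)
        = ∫ x in (C + 0)..(C + 1), 1 / x :=
          intervalIntegral.integral_comp_add_left (fun x => 1/x) C
      _ = Real.log ((C + 1) / (C + 0)) := integral_one_div h0
      _ = D := by rw [add_zero, hratio, Real.log_exp]
  · intro C' hC' hlog
    simp only [Set.mem_Icc, not_and, not_le] at hC'
    have hs : 0 < C' ∨ C' < -1 := by
      rcases le_or_gt (-1) C' with h | h
      · left; exact hC' h
      · right; exact h
    have hC'0 : C' ≠ 0 := by rcases hs with h | h <;> intro hh <;> linarith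
    have hpos : 0 < (C' + 1) / C' := by
      rcases hs with h | h
      · positivity
      · apply div_pos_of_neg_of_neg <;> linarith
    have hexp : (C' + 1) / C' = Real.exp D := by
      rw [← hlog, Real.exp_log hpos]
    rw [hC]
    rw [div_eq_iff hC'0] at hexp
    field_simp
    linarith [mul_comm C' (Real.exp D)]
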